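/- Let D be a finite index type with family S : D → Type of nonempty finite types, and let a_i, b_i ⊆ D for i ∈ Fin L (taken cyclically) with a_i ∩ b_i = ∅, c_i = a_i ∪ b_i, and b_{i+1} ⊆ c_i for all i. For each i let f_i be a strictly positive conditional pmf of the a_i-coordinates given the b_i-coordinates, with conditional replacement operators T_i(h) = f_{i+1} · h_{b_{i+1}} mapping pmfs on ∏_{j∈c_i} S j to pmfs on ∏_{j∈c_{i+1}} S j. Fix i and let 𝕀 = T_{i-1} ∘ ⋯ ∘ T_{i+1} ∘ T_i denote the composite operator for one full cycle returning to ∏_{j∈c_i} S j. If π is a positive pmf on ∏_{j∈c_i} S j with 𝕀(π) = π, then for every positive pmf q on ∏_{j∈c_i} S j, I(π; 𝕀(q)) ≤ I(π; q). -/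

import Mathlib

set_option maxHeartbeats 1000000
set_option linter.unusedSectionVars false

noncomputable section

variable {D : Type*}

/-- Configurations of the coordinates indexed by a finite set `c ⊆ D`. -/
abbrev Cfg (S : D → Type*) (c : Finset D) : Type _ := ∀ j : c, S j

/-- Kullback–Leibler divergence, with the convention `0 * log 0 = 0`. -/
def KLd {Z : Type*} [Fintype Z] (p q : Z → ℝ) : ℝ :=
  ∑ z, p z * Real.log (p z / q z)

/-- The `b`-marginal of a function `h` on the `c`-coordinates, for `b ⊆ c`. -/
def marg (S : D → Type*) [DecidableEq D] [∀ j, Fintype (S j)] [∀ j, DecidableEq (S j)]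
    {b c : Finset D} (hbc : b ⊆ c) (h : Cfg S c → ℝ) : Cfg S b → ℝ :=
  fun xb => ∑ x : Cfg S c, if (fun j : b => x ⟨j.1, hbc j.2⟩) = xb then h x else 0

/-- The conditional replacement operator `T (h) = f (x_a | x_b) * h_b (x_b)`. -/
def condRepl (S : D → Type*) [DecidableEq D] [∀ j, Fintype (S j)] [∀ j, DecidableEq (S j)]
    {a b c : Finset D} (hbc : b ⊆ c) (f : Cfg S a → Cfg S b → ℝ) (h : Cfg S c → ℝ) :
    Cfg S (a ∪ b) → ℝ :=
  fun x => f (fun j : a => x ⟨j.1, Finset.mem_union_left b j.2⟩)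
             (fun j : b => x ⟨j.1, Finset.mem_union_right a j.2⟩) *
           marg S hbc h (fun j : b => x ⟨j.1, Finset.mem_union_right a j.2⟩)

/-- One step of the iterative conditional replacement cycle: the pmf attached to
index `i` is replaced, via the conditional replacement operator `T_i` (which uses
the conditional pmf `f (i+1)`), by a pmf attached to index `i + 1`. -/
def cycleStep (S : D → Type*) [DecidableEq D] [∀ j, Fintype (S j)] [∀ j, DecidableEq (S j)]
    {L : ℕ} [NeZero L] (a b : Fin L → Finset D)
    (f : ∀ i, Cfg S (a i) → Cfg S (b i) → ℝ)
    (hcyc : ∀ i, b (i + 1) ⊆ a i ∪ b i)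
    (p : Σ i : Fin L, (Cfg S (a i ∪ b i) → ℝ)) :
    Σ i : Fin L, (Cfg S (a i ∪ b i) → ℝ) :=
  ⟨p.1 + 1, condRepl S (hcyc p.1) (f (p.1 + 1)) p.2⟩



/-- Log-sum inequality on a nonempty finset with positive weights. -/
lemma logSum_aux {Z : Type*} (s : Finset Z) (p q : Z → ℝ)
    (hp : ∀ x ∈ s, 0 < p x) (hq : ∀ x ∈ s, 0 < q x) (hs : s.Nonempty) :
    (∑ x ∈ s, p x) * Real.log ((∑ x ∈ s, p x) / (∑ x ∈ s, q x)) ≤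
      ∑ x ∈ s, p x * Real.log (p x / q x) := by
  set A := ∑ x ∈ s, p x with hA
  set B := ∑ x ∈ s, q x with hB
  have hApos : 0 < A := Finset.sum_pos hp hs
  have hBpos : 0 < B := Finset.sum_pos hq hs
  have key : ∀ x ∈ s, p x * Real.log (A / B) - p x * Real.log (p x / q x)
      ≤ A / B * q x - p x := by
    intro x hx
    have hpx := hp x hx
    have hqx := hq x hx
    have ht : (0:ℝ) < A / B * (q x / p x) := by positivity
    have h1 : p x * Real.log (A / B) - p x * Real.log (p x / q x)
        = p x * Real.log (A / B * (q x / p x)) := by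
      rw [← mul_sub]
      congr 1
      rw [← Real.log_div (by positivity) (by positivity)]
      congr 1
      field_simp
    rw [h1]
    have h2 := Real.log_le_sub_one_of_pos ht
    calc p x * Real.log (A / B * (q x / p x)) ≤ p x * (A / B * (q x / p x) - 1) :=
          mul_le_mul_of_nonneg_left h2 hpx.le
      _ = A / B * q x - p x := by field_simp
  have hsum := Finset.sum_le_sum key
  rw [Finset.sum_sub_distrib, Finset.sum_sub_distrib, ← Finset.sum_mul, ← Finset.mul_sum] at hsum
  rw [← hA, ← hB] at hsum
  have : A / B * B = A := by field_simp
  linarith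


section helpers


variable (S : D → Type*) [DecidableEq D] [∀ j, Fintype (S j)] [∀ j, DecidableEq (S j)]

/-- Restriction of a configuration along a subset inclusion. -/
def restr {b c : Finset D} (hbc : b ⊆ c) (x : Cfg S c) : Cfg S b :=
  fun j => x ⟨j.1, hbc j.2⟩

lemma marg_eq_filter {b c : Finset D} (hbc : b ⊆ c) (h : Cfg S c → ℝ) (xb : Cfg S b) :
    marg S hbc h xb = ∑ x ∈ Finset.univ.filter (fun x : Cfg S c => restr S hbc x = xb), h x := by
  rw [Finset.sum_filter]; rfl

lemma exists_ext [∀ j, Nonempty (S j)] {b c : Finset D} (hbc : b ⊆ c) (xb : Cfg S b) :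
    ∃ x : Cfg S c, restr S hbc x = xb := by
  classical
  refine ⟨fun j => if h : j.1 ∈ b then xb ⟨j.1, h⟩ else Classical.arbitrary (S j.1), ?_⟩
  funext j
  simp [restr, j.2]

lemma fiber_nonempty [∀ j, Nonempty (S j)] {b c : Finset D} (hbc : b ⊆ c) (xb : Cfg S b) :
    (Finset.univ.filter (fun x : Cfg S c => restr S hbc x = xb)).Nonempty := by
  obtain ⟨x, hx⟩ := exists_ext S hbc xb
  exact ⟨x, by simp [hx]⟩

lemma marg_pos [∀ j, Nonempty (S j)] {b c : Finset D} (hbc : b ⊆ c) {h : Cfg S c → ℝ}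
    (hh : ∀ x, 0 < h x) (xb : Cfg S b) : 0 < marg S hbc h xb := by
  rw [marg_eq_filter]
  exact Finset.sum_pos (fun x _ => hh x) (fiber_nonempty S hbc xb)

lemma sum_marg {b c : Finset D} (hbc : b ⊆ c) (h : Cfg S c → ℝ) :
    ∑ xb, marg S hbc h xb = ∑ x, h x := by
  unfold marg
  rw [Finset.sum_comm]
  exact Finset.sum_congr rfl fun x _ => by rw [Finset.sum_ite_eq]; simp


/-- Gluing a pair of configurations on disjoint index sets. -/
def glue {a b : Finset D} (hab : Disjoint a b) : Cfg S a × Cfg S b ≃ Cfg S (a ∪ b) where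
  toFun p := fun j => if h : j.1 ∈ a then p.1 ⟨j.1, h⟩
    else p.2 ⟨j.1, (Finset.mem_union.1 j.2).resolve_left h⟩
  invFun x := (restr S Finset.subset_union_left x, restr S Finset.subset_union_right x)
  left_inv p := by
    refine Prod.ext ?_ ?_
    · funext j; simp [restr, j.2]
    · funext j
      have : j.1 ∉ a := Finset.disjoint_right.mp hab j.2
      simp [restr, this]
  right_inv x := by
    funext j
    by_cases h : j.1 ∈ a <;> simp [restr, h]

lemma restrA_glue {a b : Finset D} (hab : Disjoint a b) (xa : Cfg S a) (xb : Cfg S b) :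
    restr S Finset.subset_union_left (glue S hab (xa, xb)) = xa := by
  funext j; simp [restr, glue, j.2]

lemma restrB_glue {a b : Finset D} (hab : Disjoint a b) (xa : Cfg S a) (xb : Cfg S b) :
    restr S Finset.subset_union_right (glue S hab (xa, xb)) = xb := by
  funext j
  have : j.1 ∉ a := Finset.disjoint_right.mp hab j.2
  simp [restr, glue, this]

lemma sum_union {a b : Finset D} (hab : Disjoint a b) (F : Cfg S a → Cfg S b → ℝ) :
    ∑ x : Cfg S (a ∪ b),
        F (restr S Finset.subset_union_left x) (restr S Finset.subset_union_right x)
      = ∑ xa, ∑ xb, F xa xb := by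
  rw [← Equiv.sum_comp (glue S hab)
    (fun x => F (restr S Finset.subset_union_left x) (restr S Finset.subset_union_right x)),
    Fintype.sum_prod_type]
  exact Finset.sum_congr rfl fun xa _ => Finset.sum_congr rfl fun xb _ => by
    rw [restrA_glue, restrB_glue]


lemma condRepl_eq {a b c : Finset D} (hbc : b ⊆ c) (f : Cfg S a → Cfg S b → ℝ)
    (h : Cfg S c → ℝ) :
    condRepl S hbc f h = fun x =>
      f (restr S Finset.subset_union_left x) (restr S Finset.subset_union_right x) *
        marg S hbc h (restr S Finset.subset_union_right x) := rfl

lemma condRepl_pos [∀ j, Nonempty (S j)] {a b c : Finset D} (hbc : b ⊆ c)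
    {f : Cfg S a → Cfg S b → ℝ} (hf : ∀ xa xb, 0 < f xa xb)
    {h : Cfg S c → ℝ} (hh : ∀ x, 0 < h x) (x : Cfg S (a ∪ b)) :
    0 < condRepl S hbc f h x := by
  rw [condRepl_eq]
  exact mul_pos (hf _ _) (marg_pos S hbc hh _)

lemma condRepl_sum {a b c : Finset D} (hbc : b ⊆ c) (hab : Disjoint a b)
    {f : Cfg S a → Cfg S b → ℝ} (hfsum : ∀ xb, ∑ xa, f xa xb = 1)
    {h : Cfg S c → ℝ} (hhsum : ∑ x, h x = 1) :
    ∑ x, condRepl S hbc f h x = 1 := by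
  rw [condRepl_eq]
  rw [sum_union S hab (fun xa xb => f xa xb * marg S hbc h xb)]
  have : ∀ xb : Cfg S b, ∑ xa, f xa xb * marg S hbc h xb = marg S hbc h xb := by
    intro xb
    rw [← Finset.sum_mul, hfsum, one_mul]
  rw [Finset.sum_comm]
  calc ∑ xb, ∑ xa, f xa xb * marg S hbc h xb = ∑ xb, marg S hbc h xb :=
        Finset.sum_congr rfl fun xb _ => this xb
    _ = 1 := by rw [sum_marg, hhsum]

lemma condRepl_kl [∀ j, Nonempty (S j)] {a b c : Finset D} (hbc : b ⊆ c) (hab : Disjoint a b)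
    {f : Cfg S a → Cfg S b → ℝ} (hf : ∀ xa xb, 0 < f xa xb) (hfsum : ∀ xb, ∑ xa, f xa xb = 1)
    {p q : Cfg S c → ℝ} (hp : ∀ x, 0 < p x) (hq : ∀ x, 0 < q x) :
    KLd (condRepl S hbc f p) (condRepl S hbc f q) = KLd (marg S hbc p) (marg S hbc q) := by
  unfold KLd
  have step1 : ∀ x : Cfg S (a ∪ b),
      condRepl S hbc f p x * Real.log (condRepl S hbc f p x / condRepl S hbc f q x) =
      f (restr S Finset.subset_union_left x) (restr S Finset.subset_union_right x) *
        (marg S hbc p (restr S Finset.subset_union_right x) *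
          Real.log (marg S hbc p (restr S Finset.subset_union_right x) /
            marg S hbc q (restr S Finset.subset_union_right x))) := by
    intro x
    rw [condRepl_eq, condRepl_eq]
    set fa := f (restr S Finset.subset_union_left x) (restr S Finset.subset_union_right x)
    have hfa : fa ≠ 0 := (hf _ _).ne'
    rw [mul_div_mul_left _ _ hfa, mul_assoc]
  calc ∑ x, condRepl S hbc f p x * Real.log (condRepl S hbc f p x / condRepl S hbc f q x)
      = ∑ x : Cfg S (a ∪ b),
          f (restr S Finset.subset_union_left x) (restr S Finset.subset_union_right x) *
            (marg S hbc p (restr S Finset.subset_union_right x) *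
              Real.log (marg S hbc p (restr S Finset.subset_union_right x) /
                marg S hbc q (restr S Finset.subset_union_right x))) :=
        Finset.sum_congr rfl fun x _ => step1 x
    _ = ∑ xa, ∑ xb, f xa xb *
          (marg S hbc p xb * Real.log (marg S hbc p xb / marg S hbc q xb)) :=
        sum_union S hab (fun xa xb => f xa xb *
          (marg S hbc p xb * Real.log (marg S hbc p xb / marg S hbc q xb)))
    _ = ∑ xb, marg S hbc p xb * Real.log (marg S hbc p xb / marg S hbc q xb) := by
        rw [Finset.sum_comm]
        refine Finset.sum_congr rfl fun xb _ => ?_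
        rw [← Finset.sum_mul, hfsum, one_mul]

lemma marg_kl_le [∀ j, Nonempty (S j)] {b c : Finset D} (hbc : b ⊆ c)
    {p q : Cfg S c → ℝ} (hp : ∀ x, 0 < p x) (hq : ∀ x, 0 < q x) :
    KLd (marg S hbc p) (marg S hbc q) ≤ KLd p q := by
  unfold KLd
  rw [← sum_marg S hbc (fun x => p x * Real.log (p x / q x))]
  refine Finset.sum_le_sum fun xb _ => ?_
  rw [marg_eq_filter, marg_eq_filter, marg_eq_filter]
  exact logSum_aux _ p q (fun x _ => hp x) (fun x _ => hq x) (fiber_nonempty S hbc xb)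

end helpers

/-- **The full-cycle composite operator `𝕀` contracts the divergence to its fixed point.**
Under a permissible updating cycle with strictly positive conditional pmfs, if
`π` is a positive pmf on the `c i`-coordinates fixed by the composite operator
`𝕀 = T_{i-1} ∘ ⋯ ∘ T_{i+1} ∘ T_i` (one full cycle, i.e. `L` applications of
`cycleStep` starting at index `i`), then `I(π; 𝕀(q)) ≤ I(π; q)` for every
positive pmf `q` on the `c i`-coordinates. -/
theorem full_cycle_kl_contraction
    {D : Type*} [Fintype D] [DecidableEq D]
    (S : D → Type*) [∀ j, Fintype (S j)] [∀ j, DecidableEq (S j)] [∀ j, Nonempty (S j)]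
    {L : ℕ} [NeZero L] (a b : Fin L → Finset D)
    (hdisj : ∀ i, Disjoint (a i) (b i))
    (hcyc : ∀ i, b (i + 1) ⊆ a i ∪ b i)
    (f : ∀ i, Cfg S (a i) → Cfg S (b i) → ℝ)
    (hfpos : ∀ i xa xb, 0 < f i xa xb)
    (hfsum : ∀ i xb, ∑ xa, f i xa xb = 1)
    (i : Fin L) (π : Cfg S (a i ∪ b i) → ℝ)
    (hπpos : ∀ x, 0 < π x) (hπsum : ∑ x, π x = 1)
    (hfix : (cycleStep S a b f hcyc)^[L] ⟨i, π⟩ = ⟨i, π⟩)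
    (q : Cfg S (a i ∪ b i) → ℝ) (hqpos : ∀ x, 0 < q x) (hqsum : ∑ x, q x = 1)
    (q' : Cfg S (a i ∪ b i) → ℝ)
    (hq' : (cycleStep S a b f hcyc)^[L] ⟨i, q⟩ = ⟨i, q'⟩) :
    KLd π q' ≤ KLd π q := by
  classical
  set T := cycleStep S a b f hcyc with hT
  have main : ∀ k : ℕ, ∃ (j : Fin L) (P Q : Cfg S (a j ∪ b j) → ℝ),
      T^[k] ⟨i, π⟩ = ⟨j, P⟩ ∧ T^[k] ⟨i, q⟩ = ⟨j, Q⟩ ∧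
      (∀ x, 0 < P x) ∧ (∑ x, P x = 1) ∧ (∀ x, 0 < Q x) ∧ (∑ x, Q x = 1) ∧
      KLd P Q ≤ KLd π q := by
    intro k
    induction k with
    | zero => exact ⟨i, π, q, rfl, rfl, hπpos, hπsum, hqpos, hqsum, le_refl _⟩
    | succ k ih =>
      obtain ⟨j, P, Q, hP, hQ, hPpos, hPsum, hQpos, hQsum, hKL⟩ := ih
      refine ⟨j + 1, condRepl S (hcyc j) (f (j + 1)) P, condRepl S (hcyc j) (f (j + 1)) Q,
        ?_, ?_, ?_, ?_, ?_, ?_, ?_⟩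
      · rw [Function.iterate_succ_apply', hP]; rfl
      · rw [Function.iterate_succ_apply', hQ]; rfl
      · exact condRepl_pos S (hcyc j) (hfpos (j + 1)) hPpos
      · exact condRepl_sum S (hcyc j) (hdisj (j + 1)) (hfsum (j + 1)) hPsum
      · exact condRepl_pos S (hcyc j) (hfpos (j + 1)) hQpos
      · exact condRepl_sum S (hcyc j) (hdisj (j + 1)) (hfsum (j + 1)) hQsum
      · calc KLd (condRepl S (hcyc j) (f (j + 1)) P) (condRepl S (hcyc j) (f (j + 1)) Q)
            = KLd (marg S (hcyc j) P) (marg S (hcyc j) Q) :=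
              condRepl_kl S (hcyc j) (hdisj (j + 1)) (hfpos (j + 1)) (hfsum (j + 1)) hPpos hQpos
          _ ≤ KLd P Q := marg_kl_le S (hcyc j) hPpos hQpos
          _ ≤ KLd π q := hKL
  obtain ⟨j, P, Q, hP, hQ, _, _, _, _, hKL⟩ := main L
  rw [hfix] at hP
  rw [hq'] at hQ
  obtain ⟨h1, h2⟩ := Sigma.mk.inj_iff.mp hP
  subst h1
  obtain ⟨_, h4⟩ := Sigma.mk.inj_iff.mp hQ
  rw [← eq_of_heq h2, ← eq_of_heq h4] at hKL
  exact hKL
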